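/- Let α, β ∈ ℝ and w ∈ ℝ^q satisfy ‖w‖² − 4αβ > 0, and define h_{α,β,w}(Υ) = α·e^{−Υ₁} + ⟨w, Υ₂⟩ + β·e^{Υ₁}·(1 + ‖Υ₂‖²) and the hyperplane H_{α,β,w} = {Υ ∈ G_q : h_{α,β,w}(Υ) = 0}. Then H_{α,β,w} is nonempty, and for every Υ ∈ G_q the infimum of d(Υ, Ψ) over Ψ ∈ H_{α,β,w} equals (1/2)·arccosh(1 + 2·h_{α,β,w}(Υ)²/(‖w‖² − 4αβ)). -/

import Mathlib

/-- The inverse hyperbolic cosine, `arccosh x = log (x + √(x² − 1))`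
(the inverse of `cosh` on `[0, ∞)` for `x ≥ 1`). -/
noncomputable def arccosh (x : ℝ) : ℝ :=
  Real.log (x + Real.sqrt (x ^ 2 - 1))

/-- The solvable group operation on `ℝ × ℝ^q`:
`Ψ * Υ = (Υ₁ + Ψ₁, Υ₂ + e^{−Υ₁}·Ψ₂)`. -/
noncomputable def gmul {q : ℕ} (Ψ Υ : ℝ × EuclideanSpace ℝ (Fin q)) :
    ℝ × EuclideanSpace ℝ (Fin q) :=
  (Υ.1 + Ψ.1, Υ.2 + Real.exp (-Υ.1) • Ψ.2)

/-- The group inverse `Υ⁻¹ = (−Υ₁, −e^{Υ₁}·Υ₂)`. -/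
noncomputable def ginv {q : ℕ} (Υ : ℝ × EuclideanSpace ℝ (Fin q)) :
    ℝ × EuclideanSpace ℝ (Fin q) :=
  (-Υ.1, -(Real.exp Υ.1 • Υ.2))

/-- The norm `N(Υ) = arccosh((e^{−Υ₁} + e^{Υ₁}(1 + ‖Υ₂‖²))/2)`. -/
noncomputable def Nnorm {q : ℕ} (Υ : ℝ × EuclideanSpace ℝ (Fin q)) : ℝ :=
  arccosh ((Real.exp (-Υ.1) + Real.exp Υ.1 * (1 + ‖Υ.2‖ ^ 2)) / 2)

/-- The distance `d(Υ, Ψ) = N(Ψ⁻¹ * Υ)`. -/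
noncomputable def gdist {q : ℕ} (Υ Ψ : ℝ × EuclideanSpace ℝ (Fin q)) : ℝ :=
  Nnorm (gmul (ginv Ψ) Υ)

/-- The defining function of a totally geodesic hyperplane:
`h_{α,β,w}(Υ) = α·e^{−Υ₁} + ⟨w, Υ₂⟩ + β·e^{Υ₁}·(1 + ‖Υ₂‖²)`. -/
noncomputable def hplane {q : ℕ} (α β : ℝ) (w : EuclideanSpace ℝ (Fin q))
    (Υ : ℝ × EuclideanSpace ℝ (Fin q)) : ℝ :=
  α * Real.exp (-Υ.1) + (inner ℝ w Υ.2 : ℝ) + β * Real.exp Υ.1 * (1 + ‖Υ.2‖ ^ 2)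

/- ### Auxiliary lemmas -/

section Arccosh

lemma arccosh_mono {x y : ℝ} (hx : 1 ≤ x) (hxy : x ≤ y) : arccosh x ≤ arccosh y := by
  unfold arccosh
  have h0 : (0:ℝ) < x + Real.sqrt (x^2-1) := by
    have := Real.sqrt_nonneg (x^2-1); linarith
  apply Real.log_le_log h0
  have := Real.sqrt_le_sqrt (show x^2-1 ≤ y^2-1 by nlinarith)
  linarith

lemma arccosh_double {k : ℝ} (hk : 1 ≤ k) : arccosh (2*k^2 - 1) = 2 * arccosh k := by
  unfold arccosh
  have h1 : (0:ℝ) ≤ k^2 - 1 := by nlinarith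
  have h2 := Real.sq_sqrt h1
  have hs : Real.sqrt ((2*k^2-1)^2 - 1) = 2*k*Real.sqrt (k^2-1) := by
    rw [show (2*k^2-1)^2 - 1 = (2*k)^2 * (k^2-1) by ring, Real.sqrt_mul (by positivity),
      Real.sqrt_sq (by linarith)]
  rw [hs, show (2:ℝ) * Real.log (k + Real.sqrt (k^2-1)) =
      Real.log ((k + Real.sqrt (k^2-1))^2) by rw [Real.log_pow]; push_cast; ring]
  congr 1
  nlinarith [h2]

end Arccosh

section Mink
variable {E : Type*} [NormedAddCommGroup E] [InnerProductSpace ℝ E]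
open RealInnerProductSpace

lemma cs2 (a a₀ : ℝ) (z z₀ : E) : (a*a₀ + ⟪z,z₀⟫)^2 ≤ (a^2+‖z‖^2)*(a₀^2+‖z₀‖^2) := by
  have h1 : |⟪z,z₀⟫| ≤ ‖z‖*‖z₀‖ := abs_real_inner_le_norm z z₀
  have h3 : a*a₀*⟪z,z₀⟫ ≤ |a*a₀| * |⟪z,z₀⟫| := by
    calc a*a₀*⟪z,z₀⟫ ≤ |a*a₀*⟪z,z₀⟫| := le_abs_self _
    _ = |a*a₀| * |⟪z,z₀⟫| := abs_mul _ _
  have h4 : |a*a₀| * |⟪z,z₀⟫| ≤ |a*a₀| * (‖z‖*‖z₀‖) :=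
    mul_le_mul_of_nonneg_left h1 (abs_nonneg _)
  have h5 : 2*(|a*a₀| * (‖z‖*‖z₀‖)) ≤ a^2*‖z₀‖^2 + a₀^2*‖z‖^2 := by
    have he : |a*a₀| * (‖z‖*‖z₀‖) = (abs a * ‖z₀‖) * (abs a₀ * ‖z‖) := by
      rw [abs_mul]; ring
    nlinarith [sq_nonneg (abs a * ‖z₀‖ - abs a₀ * ‖z‖), sq_abs a, sq_abs a₀, he]
  have h6 : ⟪z,z₀⟫^2 ≤ (‖z‖*‖z₀‖)^2 := by
    nlinarith [h1, sq_abs ⟪z,z₀⟫, abs_nonneg ⟪z,z₀⟫]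
  nlinarith [h3, h4, h5, h6]

lemma spacelike (a₀ b₀ : ℝ) (z₀ : E) (h0 : b₀^2 = 1 + a₀^2 + ‖z₀‖^2)
    (a b : ℝ) (z : E) (horth : a*a₀ + ⟪z, z₀⟫ = b*b₀) :
    b^2 ≤ a^2 + ‖z‖^2 := by
  have hb2 : (b*b₀)^2 = (a*a₀ + ⟪z,z₀⟫)^2 := by rw [horth]
  have hcs := cs2 a a₀ z z₀
  nlinarith [sq_nonneg b, norm_nonneg z, sq_nonneg (‖z‖), sq_nonneg a]

lemma mink_cs (a₀ b₀ : ℝ) (z₀ : E) (h0 : b₀^2 = 1 + a₀^2 + ‖z₀‖^2)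
    (a₁ b₁ a₂ b₂ : ℝ) (z₁ z₂ : E)
    (h1 : a₁*a₀ + ⟪z₁, z₀⟫ = b₁*b₀) (h2 : a₂*a₀ + ⟪z₂, z₀⟫ = b₂*b₀)
    (hQ2 : 0 < a₂^2 + ‖z₂‖^2 - b₂^2) :
    (a₁*a₂ + ⟪z₁,z₂⟫ - b₁*b₂)^2 ≤ (a₁^2 + ‖z₁‖^2 - b₁^2) * (a₂^2 + ‖z₂‖^2 - b₂^2) := by
  set Q₂ : ℝ := a₂^2 + ‖z₂‖^2 - b₂^2 with hQ₂
  set μ : ℝ := (a₁*a₂ + ⟪z₁,z₂⟫ - b₁*b₂) / Q₂ with hμ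
  have horth : (a₁ - μ*a₂)*a₀ + ⟪z₁ - μ•z₂, z₀⟫ = (b₁ - μ*b₂)*b₀ := by
    rw [inner_sub_left, real_inner_smul_left]; ring_nf
    linear_combination h1 - μ * h2
  have hsp := spacelike a₀ b₀ z₀ h0 (a₁ - μ*a₂) (b₁ - μ*b₂) (z₁ - μ•z₂) horth
  have hnorm : ‖z₁ - μ•z₂‖^2 = ‖z₁‖^2 - 2*μ*⟪z₁,z₂⟫ + μ^2*‖z₂‖^2 := by
    rw [norm_sub_sq_real, real_inner_smul_right, norm_smul]
    simp [mul_pow, sq_abs]; ring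
  rw [hnorm] at hsp
  have hQ2' : Q₂ ≠ 0 := ne_of_gt hQ2
  have key : 0 ≤ (a₁^2 + ‖z₁‖^2 - b₁^2) - (a₁*a₂ + ⟪z₁,z₂⟫ - b₁*b₂)^2 / Q₂ := by
    have : (a₁^2 + ‖z₁‖^2 - b₁^2) - (a₁*a₂ + ⟪z₁,z₂⟫ - b₁*b₂)^2 / Q₂
        = ((a₁-μ*a₂)^2 + (‖z₁‖^2 - 2*μ*⟪z₁,z₂⟫ + μ^2*‖z₂‖^2) - (b₁-μ*b₂)^2) := by
      rw [hμ]; field_simp; ring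
    rw [this]; linarith
  have h7 : (a₁*a₂ + ⟪z₁,z₂⟫ - b₁*b₂)^2 / Q₂ ≤ a₁^2 + ‖z₁‖^2 - b₁^2 := by linarith
  have := (div_le_iff₀ hQ2).mp h7
  linarith

set_option maxHeartbeats 1000000 in
lemma key_ineq (α β : ℝ) (w : E) (hD : 0 < ‖w‖^2 - 4*α*β)
    (t s : ℝ) (ht : 0 < t) (hs : 0 < s) (x p : E)
    (hp : α + ⟪w,p⟫ + β*(s^2 + ‖p‖^2) = 0) :
    (α + ⟪w,x⟫ + β*(t^2 + ‖x‖^2))^2 ≤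
      ((((‖x - p‖^2 + t^2 + s^2)/(2*t*s))^2 - 1) * (‖w‖^2 - 4*α*β)) * t^2 := by
  have ht' : t ≠ 0 := ne_of_gt ht
  have hs' : s ≠ 0 := ne_of_gt hs
  set C : ℝ := (‖x - p‖^2 + t^2 + s^2)/(2*t*s) with hC
  have hxp : ‖x - p‖^2 = ‖x‖^2 - 2*⟪x,p⟫ + ‖p‖^2 := norm_sub_sq_real x p
  set A : ℝ := (1 - ‖x‖^2 - t^2)/(2*t) with hA
  set B : ℝ := (1 + ‖x‖^2 + t^2)/(2*t) with hB
  set a₀ : ℝ := (1 - ‖p‖^2 - s^2)/(2*s) with ha₀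
  set b₀ : ℝ := (1 + ‖p‖^2 + s^2)/(2*s) with hb₀
  set a₁ : ℝ := A - C*a₀ with ha₁
  set b₁ : ℝ := B - C*b₀ with hb₁
  have hz₀ : ‖s⁻¹ • p‖^2 = s⁻¹^2 * ‖p‖^2 := by
    rw [norm_smul]; simp [mul_pow, sq_abs]
  have hz₁ : ‖t⁻¹ • x - (C*s⁻¹) • p‖^2
      = t⁻¹^2*‖x‖^2 - 2*(t⁻¹*(C*s⁻¹))*⟪x,p⟫ + (C*s⁻¹)^2*‖p‖^2 := by
    rw [norm_sub_sq_real, real_inner_smul_left, real_inner_smul_right, norm_smul, norm_smul]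
    simp [mul_pow, sq_abs]; ring
  have hi10 : ⟪t⁻¹ • x - (C*s⁻¹) • p, s⁻¹ • p⟫
      = t⁻¹*s⁻¹*⟪x,p⟫ - (C*s⁻¹)*s⁻¹*‖p‖^2 := by
    rw [inner_sub_left, real_inner_smul_left, real_inner_smul_left,
      real_inner_smul_right, real_inner_smul_right, real_inner_self_eq_norm_sq]
    ring
  have hi12 : ⟪t⁻¹ • x - (C*s⁻¹) • p, w⟫ = t⁻¹*⟪x,w⟫ - (C*s⁻¹)*⟪p,w⟫ := by
    rw [inner_sub_left, real_inner_smul_left, real_inner_smul_left]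
  have i1 : A^2 - B^2 + t⁻¹^2*‖x‖^2 = -1 := by rw [hA, hB]; field_simp; ring
  have i2 : a₀^2 - b₀^2 + s⁻¹^2*‖p‖^2 = -1 := by rw [ha₀, hb₀]; field_simp; ring
  have i3 : A*a₀ - B*b₀ + t⁻¹*s⁻¹*⟪x,p⟫ = -C := by
    rw [hA, hB, ha₀, hb₀, hC, hxp]; field_simp; ring
  have h0 : b₀^2 = 1 + a₀^2 + ‖s⁻¹ • p‖^2 := by
    rw [hz₀, ha₀, hb₀]; field_simp; ring
  have h1 : a₁*a₀ + ⟪t⁻¹ • x - (C*s⁻¹) • p, s⁻¹ • p⟫ = b₁*b₀ := by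
    rw [hi10, ha₁, hb₁]; linear_combination i3 - C*i2
  have h2 : (α-β)*a₀ + ⟪w, s⁻¹ • p⟫ = (-(α+β))*b₀ := by
    rw [real_inner_smul_right]
    linear_combination s⁻¹ * hp + (α-β)*ha₀ + (α+β)*hb₀
  have hQ2 : 0 < (α-β)^2 + ‖w‖^2 - (-(α+β))^2 := by nlinarith
  have key := mink_cs a₀ b₀ (s⁻¹ • p) h0 a₁ b₁ (α-β) (-(α+β)) (t⁻¹ • x - (C*s⁻¹) • p) w h1 h2 hQ2
  rw [hi12] at key
  have e1 : a₁*(α-β) + (t⁻¹*⟪x,w⟫ - (C*s⁻¹)*⟪p,w⟫) - b₁*(-(α+β))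
      = (α + ⟪w,x⟫ + β*(t^2 + ‖x‖^2))/t := by
    simp only [real_inner_comm x w, real_inner_comm p w]
    rw [ha₁, hb₁, hA, hB]
    linear_combination (-(C*s⁻¹)) * hp + (-(C*s⁻¹)/2) * (real_inner_comm w p)
      + ((C*s⁻¹)/2) * (real_inner_comm p w) + (-C) * (α-β) * ha₀ + (-C) * (α+β) * hb₀
  have e2 : a₁^2 + ‖t⁻¹ • x - (C*s⁻¹) • p‖^2 - b₁^2 = C^2 - 1 := by
    rw [hz₁, ha₁, hb₁]; linear_combination i1 - 2*C*i3 + C^2*i2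
  rw [e1, e2] at key
  have e3 : (α + ⟪w,x⟫ + β*(t^2+‖x‖^2))^2
      = ((α + ⟪w,x⟫ + β*(t^2+‖x‖^2))/t)^2 * t^2 := by field_simp
  have e4 : (α-β)^2 + ‖w‖^2 - (-(α+β))^2 = ‖w‖^2 - 4*α*β := by ring
  rw [e4] at key
  rw [e3]
  exact mul_le_mul_of_nonneg_right key (sq_nonneg t)

end Mink

section Scalar

lemma footA (α β t nU iw nw h D : ℝ)
    (hDdef : D = nw - 4*α*β) (hth : t*h = α + t*iw + β*t^2*(1+nU)) :
    (D*(1 - t^2*(1+nU)) - 2*t*h*(α-β))*(α-β) + (2*t*D*iw - 2*t*h*nw)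
      + (D*(1 + t^2*(1+nU)) + 2*t*h*(α+β))*(α+β) = 0 := by
  subst hDdef
  linear_combination (-2*(nw-4*α*β)) * hth

lemma footB (α β t nU iw nw h D : ℝ)
    (hDdef : D = nw - 4*α*β) (hth : t*h = α + t*iw + β*t^2*(1+nU)) :
    (D*(1 - t^2*(1+nU)) - 2*t*h*(α-β))^2 + (4*t^2*D^2*nU - 8*t^2*D*h*iw + 4*t^2*h^2*nw)
      - (D*(1 + t^2*(1+nU)) + 2*t*h*(α+β))^2 = -(4*t^2*D^2) - 4*t^2*D*h^2 := by
  subst hDdef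
  linear_combination (8*t*h*(nw-4*α*β)) * hth

lemma footWP (α β t nU iw nw h D : ℝ) (ht : 0 < t) (hD : 0 < D)
    (hDdef : D = nw - 4*α*β) (hth : t*h = α + t*iw + β*t^2*(1+nU))
    (hsq : 0 ≤ nw + 2*(2*β*t)*iw + (2*β*t)^2*nU) :
    0 < (D*(1 - t^2*(1+nU)) - 2*t*h*(α-β)) + (D*(1 + t^2*(1+nU)) + 2*t*h*(α+β)) := by
  have e : (D*(1 - t^2*(1+nU)) - 2*t*h*(α-β)) + (D*(1 + t^2*(1+nU)) + 2*t*h*(α+β))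
      = 2*(D + 2*β*t*h) := by ring
  have key : D + 2*β*t*h = (nw + 2*(2*β*t)*iw + (2*β*t)^2*nU)/2 + D/2 + 2*(β*t)^2 := by
    linear_combination 2*β*hth + (1/2)*hDdef
  have pos : 0 < D + 2*β*t*h := by
    rw [key]; have := sq_nonneg (β*t); linarith
  rw [e]; positivity

lemma footPlane (α β K s' va vb nvz ivzw : ℝ)
    (hA : va*(α-β) + ivzw + vb*(α+β) = 0)
    (hB : va^2 + nvz - vb^2 = -(K^2))
    (hs' : s' = K/(va+vb)) (hwp : 0 < va+vb) (hK : 0 < K) :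
    α * s'⁻¹ + K⁻¹*ivzw + β*s'*(1+(K⁻¹)^2*nvz) = 0 := by
  have hK' : K ≠ 0 := ne_of_gt hK
  have hwp' : va+vb ≠ 0 := ne_of_gt hwp
  rw [hs']
  field_simp
  linear_combination (va+vb) * hA + β * hB

lemma footC (α β t nU iw nw h D K KK Va Vb NVZ s' : ℝ)
    (ht : 0 < t) (hD : 0 < D) (hK : 0 < K)
    (hDdef : D = nw - 4*α*β) (hth : t*h = α + t*iw + β*t^2*(1+nU))
    (hK2 : K^2 = 1 + h^2/D)
    (hVa : Va = D*(1 - t^2*(1+nU)) - 2*t*h*(α-β))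
    (hVb : Vb = D*(1 + t^2*(1+nU)) + 2*t*h*(α+β))
    (hKK : KK = 2*t*D*K)
    (hNVZ : NVZ = Vb^2 - Va^2 - KK^2)
    (hs' : s' = KK/(Va+Vb)) (hwp : 0 < Va+Vb) :
    (t^2*nU - 2*(t*(s'*KK⁻¹))*(2*t*D*nU - 2*t*h*iw) + (s'*KK⁻¹)^2*NVZ + t^2 + s'^2)
      / (2*t*s') = K := by
  have ht' : t ≠ 0 := ne_of_gt ht
  have hD' : D ≠ 0 := ne_of_gt hD
  have hK' : K ≠ 0 := ne_of_gt hK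
  have hKKpos : 0 < KK := by rw [hKK]; positivity
  have hKK' : KK ≠ 0 := ne_of_gt hKKpos
  have hwp' : Va+Vb ≠ 0 := ne_of_gt hwp
  have hs'pos : 0 < s' := by rw [hs']; exact div_pos hKKpos hwp
  have hs'' : s' ≠ 0 := ne_of_gt hs'pos
  have hDK : D*K^2 = D + h^2 := by rw [hK2]; field_simp
  have main : (t^2*nU + t^2)*(Va+Vb) + (Vb-Va) - 2*t*(2*t*D*nU - 2*t*h*iw) = 2*t*K*KK := by
    rw [hVa, hVb, hKK]
    linear_combination (-4*t*h) * hth + (-4*t^2)*hDK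
  have split : (t^2*nU - 2*(t*(s'*KK⁻¹))*(2*t*D*nU - 2*t*h*iw) + (s'*KK⁻¹)^2*NVZ + t^2 + s'^2)
      = ((t^2*nU + t^2)*(Va+Vb) + (Vb-Va) - 2*t*(2*t*D*nU - 2*t*h*iw)) / (Va+Vb) := by
    rw [hs', hNVZ]; field_simp; ring
  rw [split, main, hs']
  field_simp

end Scalar

section Coord
open RealInnerProductSpace

lemma gdist_eq {q : ℕ} (Υ Ψ : ℝ × EuclideanSpace ℝ (Fin q)) :
    gdist Υ Ψ = arccosh ((‖Real.exp Υ.1 • Υ.2 - Real.exp Ψ.1 • Ψ.2‖^2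
      + Real.exp Υ.1 ^ 2 + Real.exp Ψ.1 ^ 2) / (2 * Real.exp Υ.1 * Real.exp Ψ.1)) := by
  unfold gdist Nnorm gmul ginv
  congr 1
  have hv : Υ.2 + Real.exp (-Υ.1) • (-(Real.exp Ψ.1 • Ψ.2))
      = Real.exp (-Υ.1) • (Real.exp Υ.1 • Υ.2 - Real.exp Ψ.1 • Ψ.2) := by
    rw [smul_sub, smul_smul, ← Real.exp_add, smul_neg]
    simp [sub_eq_add_neg]
  simp only
  rw [hv, norm_smul]
  rw [show -(Υ.1 + -Ψ.1) = -Υ.1 + Ψ.1 by ring]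
  simp only [Real.exp_add, Real.exp_neg, Real.norm_eq_abs, abs_inv, Real.abs_exp, abs_of_pos (Real.exp_pos _), mul_pow]
  field_simp
  ring

lemma hplane_mul {q : ℕ} (α β : ℝ) (w : EuclideanSpace ℝ (Fin q))
    (Υ : ℝ × EuclideanSpace ℝ (Fin q)) :
    α + ⟪w, Real.exp Υ.1 • Υ.2⟫ + β*(Real.exp Υ.1 ^ 2 + ‖Real.exp Υ.1 • Υ.2‖^2)
      = hplane α β w Υ * Real.exp Υ.1 := by
  unfold hplane
  rw [real_inner_smul_right, norm_smul]
  simp only [Real.exp_neg, Real.norm_eq_abs, abs_of_pos (Real.exp_pos _), mul_pow]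
  field_simp

set_option maxHeartbeats 1000000 in
lemma exists_foot {q : ℕ} (α β : ℝ) (w : EuclideanSpace ℝ (Fin q))
    (hD : 0 < ‖w‖^2 - 4*α*β) (Υ : ℝ × EuclideanSpace ℝ (Fin q)) :
    ∃ Ψ : ℝ × EuclideanSpace ℝ (Fin q), hplane α β w Ψ = 0 ∧
      gdist Υ Ψ = arccosh (Real.sqrt (1 + hplane α β w Υ^2 / (‖w‖^2 - 4*α*β))) := by
  set D : ℝ := ‖w‖^2 - 4*α*β with hDdef
  set h : ℝ := hplane α β w Υ with hhdef
  set t : ℝ := Real.exp Υ.1 with htdef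
  have ht : 0 < t := Real.exp_pos _
  have ht' : t ≠ 0 := ne_of_gt ht
  have hD' : D ≠ 0 := ne_of_gt hD
  have hexp1 : t * Real.exp (-Υ.1) = 1 := by rw [htdef, ← Real.exp_add]; simp
  have hth : t*h = α + t*⟪w,Υ.2⟫ + β*t^2*(1+‖Υ.2‖^2) := by
    rw [hhdef]; simp only [hplane]
    linear_combination α * hexp1
  have hcomm : ⟪Υ.2, w⟫ = ⟪w, Υ.2⟫ := real_inner_comm w Υ.2
  set K : ℝ := Real.sqrt (1 + h^2/D) with hKdef
  have hK2 : K^2 = 1 + h^2/D := Real.sq_sqrt (by positivity)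
  have hK1 : 1 ≤ K := Real.one_le_sqrt.mpr (by have h0 : (0:ℝ) ≤ h^2/D := div_nonneg (sq_nonneg h) hD.le; linarith)
  have hKpos : 0 < K := lt_of_lt_of_le one_pos hK1
  set Va : ℝ := D*(1 - t^2*(1+‖Υ.2‖^2)) - 2*t*h*(α-β) with hVa
  set Vb : ℝ := D*(1 + t^2*(1+‖Υ.2‖^2)) + 2*t*h*(α+β) with hVb
  set VZ : EuclideanSpace ℝ (Fin q) := (2*t*D)•Υ.2 - (2*t*h)•w with hVZ
  set KK : ℝ := 2*t*D*K with hKK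
  have hKKpos : 0 < KK := by rw [hKK]; positivity
  have hKK' : KK ≠ 0 := ne_of_gt hKKpos
  -- vector expansions
  have hwVZ : ⟪w, VZ⟫ = 2*t*D*⟪w,Υ.2⟫ - 2*t*h*‖w‖^2 := by
    rw [hVZ, inner_sub_right, real_inner_smul_right, real_inner_smul_right,
      real_inner_self_eq_norm_sq]
  have hUVZ : ⟪Υ.2, VZ⟫ = 2*t*D*‖Υ.2‖^2 - 2*t*h*⟪w,Υ.2⟫ := by
    rw [hVZ, inner_sub_right, real_inner_smul_right, real_inner_smul_right,
      real_inner_self_eq_norm_sq, hcomm]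
  have hnVZ : ‖VZ‖^2 = 4*t^2*D^2*‖Υ.2‖^2 - 8*t^2*D*h*⟪w,Υ.2⟫ + 4*t^2*h^2*‖w‖^2 := by
    rw [hVZ, norm_sub_sq_real, real_inner_smul_left, real_inner_smul_right,
      norm_smul, norm_smul]
    simp only [mul_pow, sq_abs, Real.norm_eq_abs]
    rw [hcomm]; ring
  -- scalar facts
  have hA := footA α β t (‖Υ.2‖^2) (⟪w,Υ.2⟫) (‖w‖^2) h D hDdef hth
  have hB := footB α β t (‖Υ.2‖^2) (⟪w,Υ.2⟫) (‖w‖^2) h D hDdef hth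
  have hsq : 0 ≤ ‖w‖^2 + 2*(2*β*t)*⟪w,Υ.2⟫ + (2*β*t)^2*‖Υ.2‖^2 := by
    have expand : ‖w + (2*β*t)•Υ.2‖^2 = ‖w‖^2 + 2*(2*β*t)*⟪w,Υ.2⟫ + (2*β*t)^2*‖Υ.2‖^2 := by
      rw [norm_add_sq_real, real_inner_smul_right, norm_smul]
      simp only [mul_pow, sq_abs, Real.norm_eq_abs]; ring
    rw [← expand]; exact sq_nonneg _
  have hwp : 0 < Va + Vb := by
    rw [hVa, hVb]; exact footWP α β t (‖Υ.2‖^2) (⟪w,Υ.2⟫) (‖w‖^2) h D ht hD hDdef hth hsq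
  have hKKsq : KK^2 = 4*t^2*D^2 + 4*t^2*D*h^2 := by
    have hDK : D*K^2 = D + h^2 := by rw [hK2]; field_simp
    rw [hKK]; linear_combination (4*t^2*D)*hDK
  have hNVZval : ‖VZ‖^2 = Vb^2 - Va^2 - KK^2 := by
    rw [hnVZ, hKKsq, hVa, hVb]; linarith [hB]
  set s' : ℝ := KK/(Va+Vb) with hs'
  have hs'pos : 0 < s' := by rw [hs']; exact div_pos hKKpos hwp
  refine ⟨(Real.log s', KK⁻¹ • VZ), ?_, ?_⟩
  · have hA' : Va*(α-β) + ⟪w,VZ⟫ + Vb*(α+β) = 0 := by rw [hwVZ]; exact hA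
    have hB' : Va^2 + ‖VZ‖^2 - Vb^2 = -(KK^2) := by rw [hNVZval]; ring
    unfold hplane
    dsimp only
    rw [Real.exp_neg, Real.exp_log hs'pos, real_inner_smul_right, norm_smul]
    simp only [mul_pow, sq_abs, Real.norm_eq_abs]
    exact footPlane α β KK s' Va Vb (‖VZ‖^2) (⟪w,VZ⟫) hA' hB' hs' hwp hKKpos
  · rw [gdist_eq]
    congr 1
    dsimp only
    rw [Real.exp_log hs'pos, smul_smul]
    have hexpand : ‖Real.exp Υ.1 • Υ.2 - (s'*KK⁻¹) • VZ‖^2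
        = t^2*‖Υ.2‖^2 - 2*(t*(s'*KK⁻¹))*⟪Υ.2,VZ⟫ + (s'*KK⁻¹)^2*‖VZ‖^2 := by
      rw [norm_sub_sq_real, real_inner_smul_left, real_inner_smul_right, norm_smul, norm_smul]
      simp only [mul_pow, sq_abs, Real.norm_eq_abs]
      rw [htdef]; ring
    rw [hexpand, hUVZ, hNVZval]
    exact footC α β t (‖Υ.2‖^2) (⟪w,Υ.2⟫) (‖w‖^2) h D K KK Va Vb (Vb^2 - Va^2 - KK^2) s'
      ht hD hKpos hDdef hth hK2 hVa hVb hKK rfl hs' hwp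

end Coord

open RealInnerProductSpace in
/-- If `‖w‖² − 4αβ > 0`, the hyperplane `H_{α,β,w} = {Υ : h_{α,β,w}(Υ) = 0}` is
nonempty, and the infimum of `d(Υ, Ψ)` over `Ψ ∈ H_{α,β,w}` equals
`(1/2)·arccosh(1 + 2·h_{α,β,w}(Υ)²/(‖w‖² − 4αβ))`. -/
theorem stmt_19 (q : ℕ) (hq : 1 ≤ q) (α β : ℝ) (w : EuclideanSpace ℝ (Fin q))
    (hw : ‖w‖ ^ 2 - 4 * α * β > 0) :
    {Υ : ℝ × EuclideanSpace ℝ (Fin q) | hplane α β w Υ = 0}.Nonempty ∧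
    ∀ Υ : ℝ × EuclideanSpace ℝ (Fin q),
      sInf (gdist Υ '' {Ψ : ℝ × EuclideanSpace ℝ (Fin q) | hplane α β w Ψ = 0})
        = (1 / 2) * arccosh (1 + 2 * hplane α β w Υ ^ 2 / (‖w‖ ^ 2 - 4 * α * β)) := by
  have hD : (0:ℝ) < ‖w‖^2 - 4*α*β := hw
  constructor
  · obtain ⟨Ψ, hΨ, -⟩ := exists_foot α β w hD (0, 0)
    exact ⟨Ψ, hΨ⟩
  · intro Υ
    set D : ℝ := ‖w‖^2 - 4*α*β with hDdef
    set h : ℝ := hplane α β w Υ with hhdef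
    set K : ℝ := Real.sqrt (1 + h^2/D) with hKdef
    have hK2 : K^2 = 1 + h^2/D := Real.sq_sqrt (by positivity)
    have hK1 : 1 ≤ K := Real.one_le_sqrt.mpr (by have h0 : (0:ℝ) ≤ h^2/D := div_nonneg (sq_nonneg h) hD.le; linarith)
    have hd0 : (1/2) * arccosh (1 + 2 * h^2 / D) = arccosh K := by
      have e : 1 + 2 * h^2 / D = 2*K^2 - 1 := by rw [hK2]; ring
      rw [e, arccosh_double hK1]; ring
    rw [hd0]
    have lb : ∀ r ∈ gdist Υ '' {Ψ : ℝ × EuclideanSpace ℝ (Fin q) | hplane α β w Ψ = 0},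
        arccosh K ≤ r := by
      rintro r ⟨Ψ, hΨ, rfl⟩
      have hsΨ : (0:ℝ) < Real.exp Ψ.1 := Real.exp_pos _
      have htΥ : (0:ℝ) < Real.exp Υ.1 := Real.exp_pos _
      have hp : α + ⟪w, Real.exp Ψ.1 • Ψ.2⟫
          + β*(Real.exp Ψ.1^2 + ‖Real.exp Ψ.1 • Ψ.2‖^2) = 0 := by
        rw [hplane_mul]
        rw [Set.mem_setOf_eq] at hΨ
        rw [hΨ]; ring
      have key := key_ineq α β w hD (Real.exp Υ.1) (Real.exp Ψ.1) htΥ hsΨ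
        (Real.exp Υ.1 • Υ.2) (Real.exp Ψ.1 • Ψ.2) hp
      rw [hplane_mul] at key
      set C : ℝ := (‖Real.exp Υ.1 • Υ.2 - Real.exp Ψ.1 • Ψ.2‖^2
        + Real.exp Υ.1^2 + Real.exp Ψ.1^2)/(2*Real.exp Υ.1*Real.exp Ψ.1) with hC
      have hC1 : 1 ≤ C := by
        rw [hC, le_div_iff₀ (by positivity)]
        nlinarith [sq_nonneg (Real.exp Υ.1 - Real.exp Ψ.1),
          sq_nonneg ‖Real.exp Υ.1 • Υ.2 - Real.exp Ψ.1 • Ψ.2‖]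
      have h2 : h^2 ≤ (C^2 - 1)*D := by
        have ht2 : (0:ℝ) < Real.exp Υ.1^2 := by positivity
        have key' : (hplane α β w Υ)^2 * Real.exp Υ.1^2
            ≤ ((C^2-1)*(‖w‖^2-4*α*β)) * Real.exp Υ.1^2 := by
          calc (hplane α β w Υ)^2 * Real.exp Υ.1^2
              = (hplane α β w Υ * Real.exp Υ.1)^2 := by ring
          _ ≤ _ := key
        rw [hhdef, hDdef]
        exact le_of_mul_le_mul_right key' ht2
      have e5 : 1 + h^2/D ≤ C^2 := by
        have := (div_le_iff₀ hD).mpr h2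
        linarith
      have hKC : K ≤ C := by
        rw [hKdef]
        calc Real.sqrt (1+h^2/D) ≤ Real.sqrt (C^2) := Real.sqrt_le_sqrt e5
        _ = C := Real.sqrt_sq (by linarith)
      rw [gdist_eq]
      exact arccosh_mono hK1 hKC
    obtain ⟨Ψ₀, hΨ₀, hgd⟩ := exists_foot α β w hD Υ
    have mem : arccosh K ∈ gdist Υ '' {Ψ : ℝ × EuclideanSpace ℝ (Fin q) | hplane α β w Ψ = 0} :=
      ⟨Ψ₀, hΨ₀, hgd⟩
    exact le_antisymm (csInf_le ⟨arccosh K, fun r hr => lb r hr⟩ mem) (le_csInf ⟨_, mem⟩ lb)
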